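/- Assume the closures of F(w) and F(w') are disjoint for all distinct words w, w' of equal length. Then the set of periodic points of the similarity map φ (points x ∈ 𝓕 with φᵏ(x) = x for some k ≥ 1) is dense in the abstract fractal 𝓕. -/
import Mathlib


open Filter Set Metric Topology

/-- The length-`n` prefix word `(i 0, i 1, ..., i (n-1))` of an infinite sequence `i`. -/
def wordPrefix {m : ℕ} (i : ℕ → Fin m) (n : ℕ) : List (Fin m) :=
  (List.range n).map i

/-- The set of periodic points of the similarity map `φ` is dense in the abstract fractal. -/
theorem abstract_fractal_periodic_points_dense
    {X : Type*} [MetricSpace X] [CompactSpace X] {m : ℕ} (hm : 2 ≤ m)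
    (F : List (Fin m) → Set X)
    (hne : ∀ w : List (Fin m), (F w).Nonempty)
    (hnest : ∀ (w : List (Fin m)) (j : Fin m), F (w ++ [j]) ⊆ F w)
    (hdiam : Tendsto
      (fun n => ⨆ w : {w : List (Fin m) // w.length = n}, Metric.diam (F w.1))
      atTop (𝓝 0))
    (π : (ℕ → Fin m) → X)
    (hπ : ∀ i : ℕ → Fin m, (⋂ n : ℕ, closure (F (wordPrefix i n))) = {π i})
    (hdisj : ∀ w w' : List (Fin m), w.length = w'.length → w ≠ w' →
      Disjoint (closure (F w)) (closure (F w')))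
    (φ : Set.range π → Set.range π)
    (hφ : ∀ i : ℕ → Fin m,
      (φ ⟨π i, Set.mem_range_self i⟩ : X) = π (fun n => i (n + 1))) :
    Dense {x : Set.range π | ∃ k : ℕ, 1 ≤ k ∧ φ^[k] x = x} := by
  -- membership of π i in all the closures
  have hmem : ∀ (i : ℕ → Fin m) (N : ℕ), π i ∈ closure (F (wordPrefix i N)) := by
    intro i N
    have h : π i ∈ ⋂ n : ℕ, closure (F (wordPrefix i n)) := by
      rw [hπ i]; exact rfl
    exact Set.mem_iInter.1 h N
  -- iterates of φ
  have hiter : ∀ (k : ℕ) (i : ℕ → Fin m),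
      φ^[k] ⟨π i, Set.mem_range_self i⟩ = ⟨π (fun n => i (n + k)), Set.mem_range_self _⟩ := by
    intro k
    induction k with
    | zero => intro i; simp
    | succ k ih =>
      intro i
      rw [Function.iterate_succ_apply]
      have h1 : φ ⟨π i, Set.mem_range_self i⟩ =
          ⟨π (fun n => i (n + 1)), Set.mem_range_self _⟩ := Subtype.ext (hφ i)
      rw [h1, ih]
      exact Subtype.ext (congrArg π (funext fun n => congrArg i (by omega)))
  rw [Metric.dense_iff]
  rintro ⟨x, i, rfl⟩ r hr
  -- choose n with sup of diameters < r and n ≥ 1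
  obtain ⟨n, hsup, hn1⟩ :=
    ((hdiam.eventually (gt_mem_nhds hr)).and (eventually_ge_atTop 1)).exists
  set w : List (Fin m) := wordPrefix i n with hw
  have hwlen : w.length = n := by simp [hw, wordPrefix]
  -- the periodic sequence
  set j : ℕ → Fin m := fun k => i (k % n) with hj
  have hpre : wordPrefix j n = w := by
    simp only [hw, wordPrefix]
    exact List.map_congr_left fun a ha => by
      simp only [List.mem_range] at ha
      simp [hj, Nat.mod_eq_of_lt ha]
  have hper : (fun t => j (t + n)) = j := funext fun t => by
    simp [hj, Nat.add_mod_right]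
  -- π j is periodic for φ
  have hperiodic : φ^[n] ⟨π j, Set.mem_range_self j⟩ = ⟨π j, Set.mem_range_self j⟩ := by
    rw [hiter n j]
    exact Subtype.ext (congrArg π hper)
  -- distance estimate
  have hbd : Bornology.IsBounded (closure (F w)) :=
    (isCompact_univ.isBounded).subset (Set.subset_univ _)
  have hdist : dist (π i) (π j) < r := by
    have h1 : dist (π i) (π j) ≤ Metric.diam (closure (F w)) :=
      Metric.dist_le_diam_of_mem hbd (hmem i n) (hpre ▸ hmem j n)
    rw [Metric.diam_closure] at h1
    have h2 : Metric.diam (F w) ≤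
        ⨆ w' : {w' : List (Fin m) // w'.length = n}, Metric.diam (F w'.1) := by
      refine le_ciSup (f := fun w' : {w' : List (Fin m) // w'.length = n} => Metric.diam (F w'.1))
        ?_ ⟨w, hwlen⟩
      refine ⟨Metric.diam (Set.univ : Set X), ?_⟩
      rintro _ ⟨w', rfl⟩
      exact Metric.diam_mono (Set.subset_univ _) isCompact_univ.isBounded
    exact lt_of_le_of_lt (h1.trans h2) hsup
  exact ⟨⟨π j, Set.mem_range_self j⟩, Metric.mem_ball.2 (by rw [Subtype.dist_eq]; simpa [dist_comm] using hdist), ⟨n, hn1, hperiodic⟩⟩
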